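/- Let (X, w) be a weighted pure d-dimensional simplicial complex and let 0 ≤ i < j ≤ d−1. Then for all f, g ∈ C^j(X; ℝ): ⟨M_j^+ f, g⟩ = Σ_{σ ∈ X(i)} w(σ) ⟨M^+_{j−i−1} f_σ, g_σ⟩_{X_σ}, where M^+_{j−i−1} on the right-hand side is the non-lazy up-down walk operator of the link X_σ (defined with the link weights w_σ) and ⟨·,·⟩_{X_σ} is the inner product with respect to w_σ. In other words, localization respects the non-lazy up-down random walk. -/

import Mathlib

/-!
Weighted pure simplicial complexes, links, cochains, signless differentials
and high dimensional random walk operators.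

Conventions: faces are `Finset`s of vertices. A cochain "of dimension `k`"
(an element of `C^k(X;ℝ)`) is represented by a function `Finset V → ℝ`
evaluated on faces of **cardinality** `c = k + 1`; all operators are indexed
by cardinality.
-/

open Finset

namespace HDRW

noncomputable section

variable {V : Type*} [DecidableEq V] [Fintype V]

/-- A weighted family of faces (the data of a weighted complex or of a link). -/
structure WFam (V : Type*) [DecidableEq V] [Fintype V] where
  faces : Finset (Finset V)
  w : Finset V → ℝ

namespace WFam

/-- The faces of cardinality `c` (i.e. of dimension `c - 1`). -/
def dimFaces (Y : WFam V) (c : ℕ) : Finset (Finset V) :=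
  Y.faces.filter fun σ => σ.card = c

/-- The link of a face `τ`, as a weighted family; the weights are
`w_τ(s) = w (s ∪ τ) / (C(|s| + |τ|, |τ|) * w τ)`. -/
def link (Y : WFam V) (τ : Finset V) : WFam V where
  faces := Finset.univ.powerset.filter fun s => Disjoint s τ ∧ s ∪ τ ∈ Y.faces
  w := fun s => Y.w (s ∪ τ) / (((s.card + τ.card).choose τ.card : ℝ) * Y.w τ)

/-- The inner product of two `c`-cochains: `⟨f, g⟩ = Σ_{σ} w σ * f σ * g σ`. -/
def inner (Y : WFam V) (c : ℕ) (f g : Finset V → ℝ) : ℝ :=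
  ∑ σ ∈ Y.dimFaces c, Y.w σ * (f σ * g σ)

/-- The squared norm `‖f‖² = ⟨f, f⟩` of a `c`-cochain. -/
def norm2 (Y : WFam V) (c : ℕ) (f : Finset V → ℝ) : ℝ := Y.inner c f f

end WFam

/-- The signless differential `d` from cochains on faces of cardinality `c`
(dimension `c-1`) to cochains on faces of cardinality `c+1`:
`(d f)(σ) = (1/(c+1)) Σ_{τ ⊆ σ, |τ| = c} f τ`. -/
def sDiff (c : ℕ) (f : Finset V → ℝ) : Finset V → ℝ :=
  fun σ => ((c : ℝ) + 1)⁻¹ * ∑ τ ∈ σ.powerset.filter (fun τ => τ.card = c), f τ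

/-- Iterated signless differential `C_a → C_{a+n}` (in cardinality indexing),
i.e. `d_{a+n-2} ⋯ d_{a-1}` in dimension indexing. -/
def sDiffIter (a : ℕ) : ℕ → (Finset V → ℝ) → (Finset V → ℝ)
  | 0, f => f
  | n + 1, f => sDiff (a + n) (sDiffIter a n f)

namespace WFam

/-- The adjoint `d^*` of the signless differential, from cochains on faces of
cardinality `c+1` to cochains on faces of cardinality `c`; it is given by the
explicit formula `(d^* f)(τ) = Σ_{σ ∈ X(c), τ ⊆ σ} w_τ(σ ∖ τ) * f σ` (a sum
over the cardinality-`(c+1)` faces containing `τ`). -/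
def sAdj (Y : WFam V) (c : ℕ) (f : Finset V → ℝ) : Finset V → ℝ :=
  fun τ => ∑ σ ∈ (Y.dimFaces (c + 1)).filter (fun σ => τ ⊆ σ),
    (Y.link τ).w (σ \ τ) * f σ

/-- Iterated adjoint of the signless differential, `C_{a+n} → C_a`
(in cardinality indexing), i.e. `d_{a-1}^* ⋯ d_{a+n-2}^*`. -/
def sAdjIter (Y : WFam V) : ℕ → ℕ → (Finset V → ℝ) → (Finset V → ℝ)
  | _, 0, f => f
  | a, n + 1, f => Y.sAdj a (sAdjIter Y (a + 1) n f)

/-- The non-lazy up-down random walk operator `M⁺` on cochains of cardinality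
`c` (dimension `k = c-1`): `(M⁺ f)(σ) = (1/(k+1)) Σ_{τ, σ ∪ τ ∈ X(k+1)} w_σ(τ∖σ) f τ`. -/
def nonLazy (Y : WFam V) (c : ℕ) (f : Finset V → ℝ) : Finset V → ℝ :=
  fun σ => (c : ℝ)⁻¹ *
    ∑ τ ∈ (Y.dimFaces c).filter (fun τ => σ ∪ τ ∈ Y.dimFaces (c + 1)),
      (Y.link σ).w (τ \ σ) * f τ

/-- The (lazy) up-down random walk operator `U` on cochains of cardinality `c`
(dimension `k = c-1`):
`(U f)(σ) = (1/(k+2)) f σ + (1/(k+2)) Σ_{τ, σ ∪ τ ∈ X(k+1)} w_σ(τ∖σ) f τ`. -/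
def upDown (Y : WFam V) (c : ℕ) (f : Finset V → ℝ) : Finset V → ℝ :=
  fun σ => ((c : ℝ) + 1)⁻¹ * f σ + ((c : ℝ) + 1)⁻¹ *
    ∑ τ ∈ (Y.dimFaces c).filter (fun τ => σ ∪ τ ∈ Y.dimFaces (c + 1)),
      (Y.link σ).w (τ \ σ) * f τ

/-- The down-up random walk operator `D` on cochains of cardinality `c`
(dimension `k = c-1`). -/
def downUp (Y : WFam V) (c : ℕ) (f : Finset V → ℝ) : Finset V → ℝ :=
  fun σ => (c : ℝ)⁻¹ *
      (∑ τ' ∈ σ.powerset.filter (fun τ' => τ'.card = c - 1), (Y.link τ').w (σ \ τ')) * f σ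
    + (c : ℝ)⁻¹ *
      ∑ τ ∈ (Y.dimFaces c).filter (fun τ => τ ≠ σ ∧ σ ∩ τ ∈ Y.dimFaces (c - 1)),
        (Y.link (σ ∩ τ)).w (τ \ σ) * f τ

/-- The `i`-down-up operator `D^i = d ⋯ d d^* ⋯ d^*` (going down `i+1` steps and
back up) on cochains of cardinality `c` (dimension `k = c-1`); in dimension
indexing this is `D_k^i = d_{k-1} ⋯ d_{k-i-1} d_{k-i-1}^* ⋯ d_{k-1}^*`. -/
def downUpIter (Y : WFam V) (c i : ℕ) (f : Finset V → ℝ) : Finset V → ℝ :=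
  sDiffIter (c - (i + 1)) (i + 1) (Y.sAdjIter (c - (i + 1)) (i + 1) f)

/-- `Y` (through its 1-skeleton) is a `γ`-(one sided) spectral expander:
every function on the vertices orthogonal to the constants has Rayleigh
quotient of the non-lazy random walk at most `γ` (Rayleigh characterization of
"the second largest eigenvalue of `M₀⁺` is at most `γ`"). -/
def isExpander (Y : WFam V) (γ : ℝ) : Prop :=
  ∀ f : Finset V → ℝ, Y.inner 1 f (fun _ => 1) = 0 →
    Y.inner 1 (Y.nonLazy 1 f) f ≤ γ * Y.norm2 1 f

/-- `Y` (through its 1-skeleton) is connected: the eigenvalue `1` of the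
non-lazy random walk `M₀⁺` has multiplicity one, i.e. every nonzero function on
the vertices orthogonal to the constants has Rayleigh quotient strictly
less than `1`. -/
def isConnected (Y : WFam V) : Prop :=
  ∀ f : Finset V → ℝ, Y.inner 1 f (fun _ => 1) = 0 → Y.norm2 1 f ≠ 0 →
    Y.inner 1 (Y.nonLazy 1 f) f < Y.norm2 1 f

/-- `f` is an `i`-level cochain of cardinality `c` (dimension `k = c-1`) with
respect to localization: for every face `σ` of cardinality `i` (i.e. of
dimension `i-1`), the localization `f_σ` is orthogonal to the constants in the
link `X_σ`. -/
def isLevel (Y : WFam V) (i c : ℕ) (f : Finset V → ℝ) : Prop :=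
  ∀ σ ∈ Y.dimFaces i,
    (Y.link σ).inner (c - i) (fun s => f (σ ∪ s)) (fun _ => 1) = 0

/-- `f` is a proper `i`-level cochain of cardinality `c`: it is an `i`-level
cochain which is in addition orthogonal to every `(i+1)`-level cochain. -/
def isProperLevel (Y : WFam V) (i c : ℕ) (f : Finset V → ℝ) : Prop :=
  Y.isLevel i c f ∧ ∀ g : Finset V → ℝ, Y.isLevel (i + 1) c g → Y.inner c f g = 0

end WFam

/-- The coboundary operator on oriented cochains (represented by their values
on the increasing ordering of each face, with respect to a linear order on the
vertices): `(δ f)(σ) = Σ_{j} (-1)^j f(σ ∖ {j-th smallest element of σ})`. -/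
def coboundary {V : Type*} [LinearOrder V] [Fintype V] (f : Finset V → ℝ) :
    Finset V → ℝ :=
  fun σ => ∑ v ∈ σ, (-1 : ℝ) ^ (σ.filter (fun u => u < v)).card * f (σ.erase v)

/-- A weighted pure `d`-dimensional simplicial complex: a downward closed
family of faces, each contained in a face of cardinality `d+1`
(dimension `d`), together with a weight function `w : X → (0, 1]` summing to
`1` on the top faces and satisfying the averaging recurrence on lower faces. -/
structure WSC (V : Type*) [DecidableEq V] [Fintype V] (d : ℕ) extends WFam V where
  empty_mem : ∅ ∈ faces
  down_closed : ∀ ⦃σ⦄, σ ∈ faces → ∀ ⦃τ⦄, τ ⊆ σ → τ ∈ faces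
  isPure : ∀ σ ∈ faces, ∃ σ' ∈ faces, σ ⊆ σ' ∧ σ'.card = d + 1
  w_pos : ∀ σ ∈ faces, 0 < w σ
  w_le_one : ∀ σ ∈ faces, w σ ≤ 1
  w_sum_top : ∑ σ ∈ faces.filter (fun σ => σ.card = d + 1), w σ = 1
  w_down : ∀ τ ∈ faces, τ.card ≤ d →
    w τ = (((d + 1).choose τ.card : ℝ))⁻¹ *
      ∑ σ ∈ faces.filter (fun σ => σ.card = d + 1 ∧ τ ⊆ σ), w σ


/-! ### Auxiliary lemmas for Statement 8 -/

lemma nat_choose_aux (a b : ℕ) :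
    (a + b + 1) * ((a + b + 2) * (a + b).choose a) =
      (b + 1) * ((b + 2) * (a + b + 2).choose a) := by
  have h1 : (a + b).choose a * Nat.factorial b * Nat.factorial a = Nat.factorial (a + b) := by
    rw [add_comm a b]; exact Nat.add_choose_mul_factorial_mul_factorial b a
  have h2 : (a + b + 2).choose a * Nat.factorial (b + 2) * Nat.factorial a
      = Nat.factorial (a + b + 2) := by
    have h := Nat.add_choose_mul_factorial_mul_factorial (b + 2) a
    rwa [show b + 2 + a = a + b + 2 by omega] at h
  have hpos : 0 < Nat.factorial b * Nat.factorial a :=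
    Nat.mul_pos (Nat.factorial_pos _) (Nat.factorial_pos _)
  apply Nat.eq_of_mul_eq_mul_right hpos
  have e1 : (a+b+1) * ((a+b+2) * (a+b).choose a) * (Nat.factorial b * Nat.factorial a)
      = (a+b+2) * ((a+b+1) * Nat.factorial (a+b)) := by rw [← h1]; ring
  have e2 : (b+1) * ((b+2) * (a+b+2).choose a) * (Nat.factorial b * Nat.factorial a)
      = Nat.factorial (a+b+2) := by
    rw [← h2, Nat.factorial_succ (b+1), Nat.factorial_succ b]; ring
  rw [e1, e2, show (a+b+2) = (a+b+1)+1 from rfl, Nat.factorial_succ,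
    show (a+b+1) = (a+b)+1 from rfl, Nat.factorial_succ]

lemma coeff_aux (a b : ℕ) :
    (((a:ℝ) + b + 1))⁻¹ * (((a:ℝ) + b + 2))⁻¹ =
      ((a + b).choose a : ℝ) * ((((b + 1) * ((b + 2) * (a + b + 2).choose a)) : ℕ) : ℝ)⁻¹ := by
  have h' : (((a+b+1) * ((a+b+2) * (a+b).choose a) : ℕ) : ℝ)
      = (((b+1) * ((b+2) * (a+b+2).choose a) : ℕ) : ℝ) := by
    exact_mod_cast congrArg (fun n : ℕ => (n : ℝ)) (nat_choose_aux a b)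
  have key : ((a + b).choose a : ℝ) * ((((a:ℝ)+b+1) * ((a:ℝ)+b+2)))
      = (((b+1) * ((b+2) * (a+b+2).choose a) : ℕ) : ℝ) := by
    push_cast at h' ⊢; linear_combination h'
  have hC1 : (0:ℝ) < ((a + b).choose a : ℝ) := by
    exact_mod_cast Nat.choose_pos (show a ≤ a + b by omega)
  rw [← key, mul_inv, ← mul_assoc, mul_inv_cancel₀ hC1.ne', one_mul, mul_inv]

lemma mem_dimFaces_iff (Y : WFam V) {s : Finset V} {m : ℕ} :
    s ∈ Y.dimFaces m ↔ s ∈ Y.faces ∧ s.card = m := Finset.mem_filter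

lemma mem_link_faces_iff (Y : WFam V) {ρ s : Finset V} :
    s ∈ (Y.link ρ).faces ↔ Disjoint s ρ ∧ s ∪ ρ ∈ Y.faces := by
  simp [WFam.link]

lemma mem_link_dimFaces_iff (Y : WFam V) {ρ s : Finset V} {m : ℕ} :
    s ∈ (Y.link ρ).dimFaces m ↔ Disjoint s ρ ∧ s ∪ ρ ∈ Y.faces ∧ s.card = m := by
  simp [WFam.dimFaces, WFam.link, and_assoc]

/-- LHS per-term weight computation:
`w σ * w_σ(τ \ σ) = w (σ ∪ τ) / (c + 1)` for `σ, τ` cardinality-`c` faces whose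
union is a cardinality-`(c+1)` face. -/
lemma lhs_weight {d : ℕ} (X : WSC V d) {σ τ : Finset V} {c : ℕ}
    (hσF : σ ∈ X.faces) (hσc : σ.card = c)
    (huF : σ ∪ τ ∈ X.faces) (huc : (σ ∪ τ).card = c + 1) :
    X.w σ * (X.toWFam.link σ).w (τ \ σ) = X.w (σ ∪ τ) * (((c:ℝ) + 1))⁻¹ := by
  have hds : τ \ σ = (σ ∪ τ) \ σ := (Finset.union_sdiff_left σ τ).symm
  have hcard : (τ \ σ).card = 1 := by
    rw [hds, Finset.card_sdiff_of_subset Finset.subset_union_left, huc, hσc]; omega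
  have hun : (τ \ σ) ∪ σ = σ ∪ τ := by
    rw [Finset.sdiff_union_self_eq_union, Finset.union_comm]
  have hw0 : X.w σ ≠ 0 := (X.w_pos _ hσF).ne'
  show X.w σ * (X.w ((τ \ σ) ∪ σ) / ((((τ \ σ).card + σ.card).choose σ.card : ℝ) * X.w σ))
      = X.w (σ ∪ τ) * (((c:ℝ) + 1))⁻¹
  rw [hun, hcard, hσc, show 1 + c = c + 1 by omega, Nat.choose_succ_self_right]
  have hc1 : ((c + 1 : ℕ) : ℝ) ≠ 0 := by positivity
  field_simp
  push_cast; ring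

/-- RHS per-term weight computation in the link of `ρ`. -/
lemma rhs_weight {d : ℕ} (X : WSC V d) {ρ s t : Finset V} {a b : ℕ}
    (hρF : ρ ∈ X.faces) (hρa : ρ.card = a)
    (hsd : Disjoint s ρ) (hsF : s ∪ ρ ∈ X.faces) (hsc : s.card = b + 1)
    (hstd : Disjoint (s ∪ t) ρ) (hstF : (s ∪ t) ∪ ρ ∈ X.faces)
    (hstc : (s ∪ t).card = b + 2) :
    X.w ρ * ((X.toWFam.link ρ).w s * ((X.toWFam.link ρ).link s).w (t \ s)) =
      (((b + 2) * (a + b + 2).choose a : ℕ) : ℝ)⁻¹ * X.w ((s ∪ t) ∪ ρ) := by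
  set L := X.toWFam.link ρ with hL
  have hts : t \ s = (s ∪ t) \ s := (Finset.union_sdiff_left s t).symm
  have htsc : (t \ s).card = 1 := by
    rw [hts, Finset.card_sdiff_of_subset Finset.subset_union_left, hstc, hsc]; omega
  have htsu : (t \ s) ∪ s = s ∪ t := by
    rw [Finset.sdiff_union_self_eq_union, Finset.union_comm]
  have hLs : L.w s = X.w (s ∪ ρ) / ((((b + 1) + a).choose a : ℝ) * X.w ρ) := by
    show X.w (s ∪ ρ) / (((s.card + ρ.card).choose ρ.card : ℝ) * X.w ρ) = _
    rw [hsc, hρa]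
  have hLst : L.w (s ∪ t) = X.w ((s ∪ t) ∪ ρ) / ((((b + 2) + a).choose a : ℝ) * X.w ρ) := by
    show X.w ((s ∪ t) ∪ ρ) / ((((s ∪ t).card + ρ.card).choose ρ.card : ℝ) * X.w ρ) = _
    rw [hstc, hρa]
  have hlink : (L.link s).w (t \ s)
      = L.w (s ∪ t) / ((((b + 2) : ℕ) : ℝ) * L.w s) := by
    show L.w ((t \ s) ∪ s) / ((((t \ s).card + s.card).choose s.card : ℝ) * L.w s) = _
    rw [htsu, htsc, hsc, show 1 + (b + 1) = (b + 1) + 1 by omega,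
      Nat.choose_succ_self_right]
  have hwρ : (0:ℝ) < X.w ρ := X.w_pos _ hρF
  have hwsρ : (0:ℝ) < X.w (s ∪ ρ) := X.w_pos _ hsF
  have hch1 : (0:ℝ) < (((b + 1) + a).choose a : ℝ) := by
    exact_mod_cast Nat.choose_pos (show a ≤ (b + 1) + a by omega)
  have hch2 : (0:ℝ) < (((b + 2) + a).choose a : ℝ) := by
    exact_mod_cast Nat.choose_pos (show a ≤ (b + 2) + a by omega)
  have hLs0 : L.w s ≠ 0 := by rw [hLs]; positivity
  rw [hlink, hLst, hLs]
  rw [show (b + 2) + a = a + b + 2 by omega] at hch2 ⊢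
  have hb2 : (0:ℝ) < ((b + 2 : ℕ) : ℝ) := by positivity
  push_cast at *
  field_simp

variable {d : ℕ}

/-- For `0 ≤ i < j ≤ d - 1` (here `a = i + 1 ≥ 1`,
`c = j + 1 ≤ d`) and all `f, g ∈ C^j(X;ℝ)`:
`⟨M_j^+ f, g⟩ = Σ_{σ ∈ X(i)} w σ ⟨M^+_{j-i-1} f_σ, g_σ⟩_{X_σ}`, where
`M^+_{j-i-1}` on the right-hand side is the non-lazy up-down walk operator of
the link `X_σ` (with the link weights `w_σ`); i.e. localization respects the
non-lazy up-down random walk. -/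
theorem nonLazy_respects_localization (X : WSC V d) (a c : ℕ) (ha : 1 ≤ a)
    (hac : a < c) (hc : c ≤ d) (f g : Finset V → ℝ) :
    X.toWFam.inner c (X.toWFam.nonLazy c f) g =
      ∑ σ ∈ X.toWFam.dimFaces a,
        X.toWFam.w σ * (X.toWFam.link σ).inner (c - a)
          ((X.toWFam.link σ).nonLazy (c - a) (fun s => f (σ ∪ s)))
          (fun s => g (σ ∪ s)) := by
  obtain ⟨b, rfl⟩ : ∃ b, c = a + b + 1 := ⟨c - a - 1, by omega⟩
  simp only [show a + b + 1 - a = b + 1 from by omega]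
  have expand : ∀ (w0 coeff gv : ℝ) (T : Finset (Finset V)) (H : Finset V → ℝ),
      w0 * ((coeff * ∑ τ ∈ T, H τ) * gv) = ∑ τ ∈ T, (w0 * coeff * gv) * H τ := by
    intro w0 coeff gv T H
    rw [Finset.mul_sum, Finset.sum_mul, Finset.mul_sum]
    exact Finset.sum_congr rfl fun τ _ => by ring
  have key1 : X.toWFam.inner (a + b + 1) (X.toWFam.nonLazy (a + b + 1) f) g
      = ∑ σ ∈ X.toWFam.dimFaces (a + b + 1),
          ∑ τ ∈ (X.toWFam.dimFaces (a + b + 1)).filter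
              (fun τ => σ ∪ τ ∈ X.toWFam.dimFaces (a + b + 1 + 1)),
            ∑ ρ ∈ Finset.powersetCard a (σ ∩ τ),
              ((((b + 1) * ((b + 2) * (a + b + 2).choose a)) : ℕ) : ℝ)⁻¹ *
                (X.w (σ ∪ τ) * (f τ * g σ)) := by
    simp only [WFam.inner, WFam.nonLazy]
    refine Finset.sum_congr rfl fun σ hσ => ?_
    obtain ⟨hσF, hσc⟩ := (mem_dimFaces_iff _).1 hσ
    rw [expand]
    refine Finset.sum_congr rfl fun τ hτ => ?_
    rw [Finset.mem_filter] at hτ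
    obtain ⟨hτD, huD⟩ := hτ
    obtain ⟨huF, huc⟩ := (mem_dimFaces_iff _).1 huD
    have hw := lhs_weight X hσF hσc huF huc
    have hcap : (σ ∩ τ).card = a + b := by
      have h1 := Finset.card_inter_add_card_union σ τ
      have h2 := ((mem_dimFaces_iff _).1 hτD).2
      omega
    have hco := coeff_aux a b
    rw [Finset.sum_const, Finset.card_powersetCard, hcap, nsmul_eq_mul]
    push_cast at hw hco ⊢
    linear_combination ((((a:ℝ) + b + 1))⁻¹ * (f τ * g σ)) * hw
      + (X.w (σ ∪ τ) * (f τ * g σ)) * hco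
  have key2 : ∀ ρ ∈ X.toWFam.dimFaces a,
      X.toWFam.w ρ * (X.toWFam.link ρ).inner (b + 1)
          ((X.toWFam.link ρ).nonLazy (b + 1) (fun s => f (ρ ∪ s))) (fun s => g (ρ ∪ s))
        = ∑ s ∈ (X.toWFam.link ρ).dimFaces (b + 1),
            ∑ t ∈ ((X.toWFam.link ρ).dimFaces (b + 1)).filter
                (fun t => s ∪ t ∈ (X.toWFam.link ρ).dimFaces (b + 1 + 1)),
              ((((b + 1) * ((b + 2) * (a + b + 2).choose a)) : ℕ) : ℝ)⁻¹ *
                (X.w ((ρ ∪ s) ∪ (ρ ∪ t)) * (f (ρ ∪ t) * g (ρ ∪ s))) := by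
    intro ρ hρ
    obtain ⟨hρF, hρa⟩ := (mem_dimFaces_iff _).1 hρ
    simp only [WFam.inner, WFam.nonLazy]
    rw [Finset.mul_sum]
    refine Finset.sum_congr rfl fun s hs => ?_
    obtain ⟨hsd, hsF, hsc⟩ := (mem_link_dimFaces_iff _).1 hs
    rw [expand, Finset.mul_sum]
    refine Finset.sum_congr rfl fun t ht => ?_
    rw [Finset.mem_filter] at ht
    obtain ⟨htD, hstD⟩ := ht
    obtain ⟨hstd, hstF, hstc⟩ := (mem_link_dimFaces_iff _).1 hstD
    have hw := rhs_weight X hρF hρa hsd hsF hsc hstd hstF hstc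
    have huu : (ρ ∪ s) ∪ (ρ ∪ t) = (s ∪ t) ∪ ρ := by
      ext x; simp only [Finset.mem_union]; tauto
    have hKK : (((b + 1) * ((b + 2) * (a + b + 2).choose a) : ℕ) : ℝ)
        = ((b + 1 : ℕ) : ℝ) * (((b + 2) * (a + b + 2).choose a : ℕ) : ℝ) := by
      push_cast; ring
    rw [huu, hKK, mul_inv]
    push_cast at hw ⊢
    linear_combination ((((b:ℝ) + 1))⁻¹ * (f (ρ ∪ t) * g (ρ ∪ s))) * hw
  rw [key1, Finset.sum_congr rfl key2]
  rw [Finset.sum_sigma', Finset.sum_sigma', Finset.sum_sigma', Finset.sum_sigma']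
  refine Finset.sum_nbij' (fun x => ⟨⟨x.2, x.1.1 \ x.2⟩, x.1.2 \ x.2⟩)
    (fun y => ⟨⟨y.1.1 ∪ y.1.2, y.1.1 ∪ y.2⟩, y.1.1⟩) ?_ ?_ ?_ ?_ ?_
  · rintro ⟨⟨σ, τ⟩, ρ⟩ hx
    simp only [Finset.mem_sigma, Finset.mem_filter, mem_dimFaces_iff,
      mem_link_faces_iff, Finset.mem_powersetCard] at hx ⊢
    obtain ⟨⟨⟨hσF, hσc⟩, ⟨hτF, hτc⟩, ⟨huF, huc⟩⟩, hρsub, hρc⟩ := hx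
    have hρσ : ρ ⊆ σ := hρsub.trans Finset.inter_subset_left
    have hρτ : ρ ⊆ τ := hρsub.trans Finset.inter_subset_right
    rw [← Finset.union_sdiff_distrib]
    rw [Finset.sdiff_union_of_subset hρσ, Finset.sdiff_union_of_subset hρτ,
      Finset.sdiff_union_of_subset (hρσ.trans Finset.subset_union_left)]
    refine ⟨⟨⟨X.down_closed hσF hρσ, hρc⟩, ⟨Finset.sdiff_disjoint, hσF⟩, ?_⟩,
      ⟨⟨Finset.sdiff_disjoint, hτF⟩, ?_⟩, ⟨Finset.sdiff_disjoint, huF⟩, ?_⟩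
    · rw [Finset.card_sdiff_of_subset hρσ]; omega
    · rw [Finset.card_sdiff_of_subset hρτ]; omega
    · rw [Finset.card_sdiff_of_subset (hρσ.trans Finset.subset_union_left)]; omega
  · rintro ⟨⟨ρ, s⟩, t⟩ hy
    simp only [Finset.mem_sigma, Finset.mem_filter, mem_dimFaces_iff,
      mem_link_faces_iff, Finset.mem_powersetCard] at hy ⊢
    obtain ⟨⟨⟨hρF, hρa⟩, ⟨hsd, hsF⟩, hsc⟩, ⟨⟨htd, htF⟩, htc⟩, ⟨hstd, hstF⟩, hstc⟩ := hy
    have huu : (ρ ∪ s) ∪ (ρ ∪ t) = (s ∪ t) ∪ ρ := by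
      ext x; simp only [Finset.mem_union]; tauto
    refine ⟨⟨⟨?_, ?_⟩, ⟨?_, ?_⟩, ?_, ?_⟩,
      Finset.subset_inter Finset.subset_union_left Finset.subset_union_left, hρa⟩
    · rw [Finset.union_comm]; exact hsF
    · rw [Finset.card_union_of_disjoint hsd.symm]; omega
    · rw [Finset.union_comm]; exact htF
    · rw [Finset.card_union_of_disjoint htd.symm]; omega
    · rw [huu]; exact hstF
    · rw [huu, Finset.card_union_of_disjoint hstd]; omega
  · rintro ⟨⟨σ, τ⟩, ρ⟩ hx
    simp only [Finset.mem_sigma, Finset.mem_filter, mem_dimFaces_iff,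
      mem_link_faces_iff, Finset.mem_powersetCard] at hx
    obtain ⟨⟨⟨hσF, hσc⟩, ⟨hτF, hτc⟩, ⟨huF, huc⟩⟩, hρsub, hρc⟩ := hx
    have hρσ : ρ ⊆ σ := hρsub.trans Finset.inter_subset_left
    have hρτ : ρ ⊆ τ := hρsub.trans Finset.inter_subset_right
    simp only [Finset.union_sdiff_of_subset hρσ, Finset.union_sdiff_of_subset hρτ]
  · rintro ⟨⟨ρ, s⟩, t⟩ hy
    simp only [Finset.mem_sigma, Finset.mem_filter, mem_dimFaces_iff,
      mem_link_faces_iff, Finset.mem_powersetCard] at hy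
    obtain ⟨⟨⟨hρF, hρa⟩, ⟨hsd, hsF⟩, hsc⟩, ⟨⟨htd, htF⟩, htc⟩, ⟨hstd, hstF⟩, hstc⟩ := hy
    simp only [Finset.union_sdiff_cancel_left hsd.symm,
      Finset.union_sdiff_cancel_left htd.symm]
  · rintro ⟨⟨σ, τ⟩, ρ⟩ hx
    simp only [Finset.mem_sigma, Finset.mem_filter, mem_dimFaces_iff,
      mem_link_faces_iff, Finset.mem_powersetCard] at hx
    obtain ⟨⟨⟨hσF, hσc⟩, ⟨hτF, hτc⟩, ⟨huF, huc⟩⟩, hρsub, hρc⟩ := hx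
    have hρσ : ρ ⊆ σ := hρsub.trans Finset.inter_subset_left
    have hρτ : ρ ⊆ τ := hρsub.trans Finset.inter_subset_right
    simp only [Finset.union_sdiff_of_subset hρσ, Finset.union_sdiff_of_subset hρτ]

end

end HDRW
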